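/- Let p be a prime and d ≥ 2 with p ∤ d. Let λ = (d−1)/d. If p ≡ 1 (mod d), then all digits of the non-terminating base p expansion of λ are equal; if p ≢ 1 (mod d), then the first digit of λ is strictly greater than some later digit. In particular, when p ≢ 1 (mod d), the rational number 1 − 1/d cannot be the F-pure threshold of any polynomial in characteristic p (since the first base p digit of an F-pure threshold is always its minimal digit). -/

import Mathlib

open MvPolynomial

/-- The `e`-th truncation of the non-terminating base `p` expansion of `α ∈ (0,1]`:
the unique multiple of `p^{-e}` with `⟨α⟩_e < α ≤ ⟨α⟩_e + p^{-e}`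
(with the convention `⟨α⟩_e = 0` for `α ≤ 0`). -/
noncomputable def trunc (p e : ℕ) (α : ℝ) : ℝ :=
  if α ≤ 0 then 0 else (⌈α * (p : ℝ) ^ e⌉ - 1) / (p : ℝ) ^ e

/-- The `e`-th digit (`e ≥ 1`) of the non-terminating base `p` expansion of `α ∈ (0,1]`,
namely `p^e ⟨α⟩_e - p^e ⟨α⟩_{e-1}`. -/
noncomputable def digit (p e : ℕ) (α : ℝ) : ℤ :=
  (⌈α * (p : ℝ) ^ e⌉ - 1) - p * (⌈α * (p : ℝ) ^ (e - 1)⌉ - 1)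

/-- Least positive residue of `m` modulo `b`: the unique `r` with `1 ≤ r ≤ b`, `r ≡ m (mod b)`. -/
def lpr (m b : ℤ) : ℤ := if m % b = 0 then b else m % b

/-- The `e`-th Frobenius power `m^{[p^e]} = (x_1^{p^e}, …, x_n^{p^e})`. -/
noncomputable def frobPow (p n : ℕ) (K : Type*) [Field K] (e : ℕ) :
    Ideal (MvPolynomial (Fin n) K) :=
  Ideal.span (Set.range fun i => (X i : MvPolynomial (Fin n) K) ^ p ^ e)

/-- `ν_f(p^e) = max { N | f^N ∉ m^{[p^e]} }`. -/
noncomputable def nu (p : ℕ) {n : ℕ} {K : Type*} [Field K]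
    (f : MvPolynomial (Fin n) K) (e : ℕ) : ℕ :=
  sSup {N : ℕ | f ^ N ∉ frobPow p n K e}

/-- The F-pure threshold `fpt(f) = lim_e ν_f(p^e)/p^e`; since the sequence is
non-decreasing and bounded, the limit equals the supremum. -/
noncomputable def fpt (p : ℕ) {n : ℕ} {K : Type*} [Field K]
    (f : MvPolynomial (Fin n) K) : ℝ :=
  ⨆ e : ℕ, (nu p f e : ℝ) / (p : ℝ) ^ e

/-- The maximal ideal `m = (x_1, …, x_n)`. -/
noncomputable def mIdeal (n : ℕ) (K : Type*) [Field K] : Ideal (MvPolynomial (Fin n) K) :=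
  Ideal.span (Set.range (X : Fin n → MvPolynomial (Fin n) K))

lemma mem_frobPow_iff {p n : ℕ} {K : Type*} [Field K] {e : ℕ}
    {h : MvPolynomial (Fin n) K} :
    h ∈ frobPow p n K e ↔ ∀ m ∈ h.support, ∃ i, p ^ e ≤ m i := by
  have hs : (Set.range fun i => (X i : MvPolynomial (Fin n) K) ^ p ^ e)
      = (fun s => monomial s (1 : K)) '' (Set.range fun i : Fin n => Finsupp.single i (p ^ e)) := by
    ext g
    simp [X_pow_eq_monomial, Set.range_comp]
  rw [frobPow, hs, mem_ideal_span_monomial_image]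
  simp [Finsupp.single_le_iff]

lemma one_not_mem_frobPow {p n : ℕ} (hp : 0 < p) {K : Type*} [Field K] (e : ℕ) :
    (1 : MvPolynomial (Fin n) K) ∉ frobPow p n K e := by
  rw [mem_frobPow_iff]
  intro hmem
  have h0 : (0 : Fin n →₀ ℕ) ∈ (1 : MvPolynomial (Fin n) K).support := by
    rw [mem_support_iff]
    simp
  obtain ⟨i, hi⟩ := hmem 0 h0
  simp at hi
  have : 0 < p ^ e := by positivity
  omega

section CharStuff
variable {p n : ℕ} {K : Type*} [Field K] [CharP K p] (hp : p.Prime)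
include hp

instance : CharP (MvPolynomial (Fin n) K) p :=
  charP_of_injective_ringHom (C_injective (Fin n) K) p

lemma frob_mem_succ {e : ℕ} {h : MvPolynomial (Fin n) K}
    (hh : h ∈ frobPow p n K e) : h ^ p ∈ frobPow p n K (e + 1) := by
  haveI := Fact.mk hp
  refine Submodule.span_induction ?_ ?_ ?_ ?_ hh
  · rintro x ⟨i, rfl⟩
    rw [← pow_mul, ← pow_succ]
    exact Ideal.subset_span ⟨i, rfl⟩
  · rw [zero_pow hp.ne_zero]; exact zero_mem _
  · intro x y _ _ hx hy
    rw [add_pow_char]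
    exact add_mem hx hy
  · intro a x _ hx
    rw [smul_eq_mul, mul_pow]
    exact Ideal.mul_mem_left _ _ hx

/-- the key combinatorial lemma -/
lemma key_lemma {a : ℕ} {g h : MvPolynomial (Fin n) K}
    (hg : g ∉ frobPow p n K a) (hh : h ∉ frobPow p n K 1) :
    g ^ p * h ∉ frobPow p n K (a + 1) := by
  haveI := Fact.mk hp
  have hp1 : 1 ≤ p := hp.one_lt.le
  -- small monomials
  rw [mem_frobPow_iff] at hg hh
  push_neg at hg hh
  obtain ⟨m0, hm0s, hm0⟩ := hg
  obtain ⟨u, hus, hu⟩ := hh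
  simp only [pow_one] at hu
  -- minimal small monomial of g
  classical
  set S : Finset (Fin n →₀ ℕ) := g.support.filter (fun w => ∀ i, w i < p ^ a) with hS
  have hSne : S.Nonempty := ⟨m0, by simp [hS, hm0s, hm0]⟩
  obtain ⟨m, hmS, hmin⟩ := S.exists_minimal hSne
  have hmsup : m ∈ g.support := (Finset.mem_filter.mp hmS).1
  have hmlt : ∀ i, m i < p ^ a := (Finset.mem_filter.mp hmS).2
  -- the coefficient computation
  have hpow : g ^ p = ∑ w ∈ g.support, monomial (p • w) ((coeff w g) ^ p) := by
    conv_lhs => rw [g.as_sum]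
    rw [sum_pow_char]
    simp [monomial_pow]
  have hcoeff : coeff (p • m + u) (g ^ p * h) = (coeff m g) ^ p * coeff u h := by
    rw [hpow, Finset.sum_mul, coeff_sum]
    rw [Finset.sum_eq_single m]
    · rw [coeff_monomial_mul']
      rw [if_pos le_self_add, add_tsub_cancel_left]
    · intro w hw hwm
      rw [coeff_monomial_mul']
      rw [if_neg]
      intro hle
      have hle' : ∀ i, w i ≤ m i := by
        intro i
        have h1 : p * w i ≤ p * m i + u i := by
          have h3 := Finsupp.le_def.mp hle i
          simpa [mul_comm] using h3
        have h2 := hu i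
        nlinarith
      have hwS : w ∈ S := by
        refine Finset.mem_filter.mpr ⟨hw, fun i => lt_of_le_of_lt (hle' i) (hmlt i)⟩
      exact hwm (le_antisymm ((Finsupp.le_iff _ _).mpr fun i _ => hle' i)
        (hmin hwS ((Finsupp.le_iff _ _).mpr fun i _ => hle' i)))
    · intro hm; exact absurd hmsup hm
  have hne : coeff (p • m + u) (g ^ p * h) ≠ 0 := by
    rw [hcoeff]
    exact mul_ne_zero (pow_ne_zero _ (mem_support_iff.mp hmsup)) (mem_support_iff.mp hus)
  rw [mem_frobPow_iff]
  push_neg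
  refine ⟨p • m + u, mem_support_iff.mpr hne, fun i => ?_⟩
  have h1 := hmlt i
  have h2 := hu i
  have : (p • m + u) i = p * m i + u i := by simp [mul_comm]
  rw [this, pow_succ]
  nlinarith

end CharStuff

section Arith
variable {p d : ℕ} (hp : p.Prime) (hd : 2 ≤ d) (hpd : ¬ p ∣ d)

/-- `A e = ⌊(d-1)p^e/d⌋` -/
def AA (p d : ℕ) (e : ℕ) : ℤ := ((d : ℤ) - 1) * (p : ℤ) ^ e / d

def tt (p d : ℕ) (e : ℕ) : ℤ := ((d : ℤ) - 1) * (p : ℤ) ^ e % d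

def ss (p d : ℕ) (e : ℕ) : ℤ := (p : ℤ) ^ e % d

include hp hd hpd

lemma ss_pos (e : ℕ) : 0 < ss p d e := by
  have hd0 : (0:ℤ) < d := by exact_mod_cast (by omega : 0 < d)
  rcases (Int.emod_nonneg ((p:ℤ)^e) hd0.ne').lt_or_eq with h | h
  · exact h
  · exfalso
    have hdvd : (d:ℤ) ∣ (p:ℤ)^e := Int.dvd_of_emod_eq_zero h.symm
    have : (d:ℕ) ∣ p ^ e := by exact_mod_cast hdvd
    have hcop : Nat.Coprime p d := (hp.coprime_iff_not_dvd).mpr hpd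
    have := (Nat.Coprime.pow_right e hcop.symm).eq_one_of_dvd this
    omega

end Arith

section Arith2
variable {p d : ℕ} (hp : p.Prime) (hd : 2 ≤ d) (hpd : ¬ p ∣ d)
include hp hd hpd

lemma ss_lt (e : ℕ) : ss p d e < d :=
  Int.emod_lt_of_pos _ (by exact_mod_cast (by omega : 0 < d))

lemma tt_eq (e : ℕ) : tt p d e = (d : ℤ) - ss p d e := by
  have h1 : tt p d e = (-(ss p d e)) % d := by
    unfold tt ss
    rw [sub_mul, one_mul, Int.sub_emod, Int.mul_emod_right]
    rw [Int.sub_emod (0 : ℤ), Int.zero_emod, Int.emod_emod_of_dvd _ dvd_rfl]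
    ring_nf
  have h2 : (-(ss p d e)) = ((d : ℤ) - ss p d e) + d * (-1) := by ring
  rw [h1, h2, Int.add_mul_emod_self_left]
  exact Int.emod_eq_of_lt (by have := ss_lt hp hd hpd e; omega)
    (by have := ss_pos hp hd hpd e; omega)

lemma NN_eq (e : ℕ) : ((d : ℤ) - 1) * (p : ℤ) ^ e = d * AA p d e + tt p d e :=
  (Int.mul_ediv_add_emod _ _).symm

lemma ceil_eq (e : ℕ) : ⌈(((d:ℝ)-1)/d * (p:ℝ)^e)⌉ = AA p d e + 1 := by
  have hd0 : (0:ℝ) < (d:ℝ) := by exact_mod_cast (by omega : 0 < d)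
  have hx : ((d:ℝ)-1)/d * (p:ℝ)^e = ((((d : ℤ) - 1) * (p : ℤ) ^ e : ℤ) : ℝ)/(d:ℝ) := by
    push_cast
    ring
  have hN := NN_eq hp hd hpd e
  have ht1 : 0 < tt p d e := by
    rw [tt_eq hp hd hpd]; have := ss_lt hp hd hpd e; omega
  have ht2 : tt p d e ≤ d := by
    rw [tt_eq hp hd hpd]; have := ss_pos hp hd hpd e; omega
  have hNR : ((d:ℝ)-1) * (p:ℝ)^e = (d:ℝ) * ((AA p d e : ℤ) : ℝ) + ((tt p d e : ℤ) : ℝ) := by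
    exact_mod_cast hN
  have ht1R : (0:ℝ) < ((tt p d e : ℤ) : ℝ) := by exact_mod_cast ht1
  have ht2R : ((tt p d e : ℤ) : ℝ) ≤ (d:ℝ) := by exact_mod_cast ht2
  rw [Int.ceil_eq_iff, hx]
  constructor
  · rw [lt_div_iff₀ hd0]
    push_cast
    nlinarith [hNR, ht1R]
  · rw [div_le_iff₀ hd0]
    push_cast
    nlinarith [hNR, ht2R]

lemma digit_eq (e : ℕ) :
    digit p (e+1) (((d:ℝ)-1)/d) = AA p d (e+1) - p * AA p d e := by
  unfold digit
  rw [show e + 1 - 1 = e from rfl, ceil_eq hp hd hpd, ceil_eq hp hd hpd]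
  ring

lemma d_mul_digit (e : ℕ) :
    (d : ℤ) * (AA p d (e+1) - p * AA p d e) = p * tt p d e - tt p d (e+1) := by
  have h1 := NN_eq hp hd hpd e
  have h2 := NN_eq hp hd hpd (e+1)
  have h3 : ((d : ℤ) - 1) * (p : ℤ) ^ (e+1) = p * (((d : ℤ) - 1) * (p : ℤ) ^ e) := by ring
  linear_combination (p:ℤ) * h1 + h3 - h2

lemma ss_zero : ss p d 0 = 1 := by
  unfold ss
  rw [pow_zero]
  exact Int.emod_eq_of_lt (by omega) (by exact_mod_cast hd)

end Arith2

section Parts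
variable {p d : ℕ} (hp : p.Prime) (hd : 2 ≤ d) (hpd : ¬ p ∣ d)
include hp hd hpd

lemma ss_cast (e : ℕ) : ss p d e = ((p ^ e % d : ℕ) : ℤ) := by
  unfold ss
  push_cast
  rfl

lemma part1 (hmod : p % d = 1 % d) :
    ∀ e, 1 ≤ e → digit p e (((d:ℝ)-1)/d) = digit p 1 (((d:ℝ)-1)/d) := by
  have hss : ∀ e, ss p d e = 1 := by
    intro e
    rw [ss_cast hp hd hpd]
    have h1 : p ^ e % d = 1 % d := by
      have : p ^ e ≡ 1 ^ e [MOD d] := Nat.ModEq.pow e hmod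
      simpa [Nat.ModEq] using this
    rw [h1, Nat.mod_eq_of_lt (by omega)]
    norm_num
  have key : ∀ j : ℕ, (d : ℤ) * (AA p d (j+1) - p * AA p d j)
      = p * ((d:ℤ) - 1) - ((d:ℤ) - 1) := by
    intro j
    rw [d_mul_digit hp hd hpd, tt_eq hp hd hpd, tt_eq hp hd hpd, hss, hss]
  intro e he
  obtain ⟨e', rfl⟩ : ∃ e', e = e' + 1 := ⟨e - 1, by omega⟩
  rw [digit_eq hp hd hpd, show (1:ℕ) = 0 + 1 from rfl, digit_eq hp hd hpd]
  have hd0 : (d : ℤ) ≠ 0 := by exact_mod_cast (by omega : d ≠ 0)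
  apply mul_left_cancel₀ hd0
  rw [key, key]

lemma part2 (hmod : p % d ≠ 1 % d) :
    ∃ e, 1 ≤ e ∧ digit p e (((d:ℝ)-1)/d) < digit p 1 (((d:ℝ)-1)/d) := by
  have hcop : Nat.Coprime p d := (hp.coprime_iff_not_dvd).mpr hpd
  set τ := d.totient with hτ
  have hτpos : 0 < τ := Nat.totient_pos.mpr (by omega)
  have hsτ : ss p d τ = 1 := by
    rw [ss_cast hp hd hpd]
    have h1 : p ^ τ % d = 1 % d := Nat.ModEq.pow_totient hcop
    rw [h1, Nat.mod_eq_of_lt (by omega)]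
    norm_num
  have hs1 : 2 ≤ ss p d 1 := by
    rw [ss_cast hp hd hpd, pow_one]
    have h0 : p % d ≠ 0 := by
      intro h
      have hdp : d ∣ p := Nat.dvd_of_mod_eq_zero h
      rcases (Nat.Prime.eq_one_or_self_of_dvd hp d hdp) with h' | h'
      · omega
      · exact hpd (h' ▸ dvd_rfl)
    have h1 : 1 % d = 1 := Nat.mod_eq_of_lt (by omega)
    have : 2 ≤ p % d := by omega
    exact_mod_cast this
  obtain ⟨j, hj, hmax⟩ := Finset.exists_max_image (Finset.Icc 1 τ) (fun i => ss p d i)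
    ⟨1, by simp [Finset.mem_Icc]; omega⟩
  simp only [Finset.mem_Icc] at hj
  have hsj : 2 ≤ ss p d j := le_trans hs1 (hmax 1 (by simp [Finset.mem_Icc]; omega))
  have hjτ : j ≠ τ := by
    intro h
    rw [h, hsτ] at hsj
    omega
  have hsj1 : ss p d (j+1) ≤ ss p d j := hmax (j+1) (by simp [Finset.mem_Icc]; omega)
  refine ⟨j+1, by omega, ?_⟩
  rw [digit_eq hp hd hpd, show (1:ℕ) = 0 + 1 from rfl, digit_eq hp hd hpd]
  have hD := d_mul_digit hp hd hpd j
  have hD0 := d_mul_digit hp hd hpd 0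
  rw [tt_eq hp hd hpd, tt_eq hp hd hpd] at hD hD0
  rw [ss_zero hp hd hpd] at hD0
  have hp2 : (2:ℤ) ≤ (p:ℤ) := by exact_mod_cast hp.two_le
  have hd2 : (2:ℤ) ≤ (d:ℤ) := by exact_mod_cast hd
  have hpos : 0 < (d:ℤ) * ((AA p d (0+1) - p * AA p d 0) - (AA p d (j+1) - p * AA p d j)) := by
    rw [mul_sub, hD0, hD]
    nlinarith [hsj, hs1, hsj1, hp2]
  nlinarith [hpos, hd2]

end Parts


set_option maxHeartbeats 1000000 in
lemma parts12 {p d : ℕ} (hp : p.Prime) (hd : 2 ≤ d) (hpd : ¬ p ∣ d) :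
    (p % d = 1 % d → ∀ e, 1 ≤ e → digit p e (((d : ℝ) - 1) / d) = digit p 1 (((d : ℝ) - 1) / d)) ∧
    (p % d ≠ 1 % d → ∃ e, 1 ≤ e ∧ digit p e (((d : ℝ) - 1) / d) < digit p 1 (((d : ℝ) - 1) / d)) :=
  ⟨part1 hp hd hpd, part2 hp hd hpd⟩

section Main

variable {p n d : ℕ} {K : Type} [Field K] [CharP K p]

lemma not_dvd_N {p d : ℕ} (hp : p.Prime) (hd : 2 ≤ d) (hpd : ¬ p ∣ d) (e : ℕ) :
    ¬ ((d:ℤ) ∣ ((d:ℤ) - 1) * (p:ℤ) ^ e) := by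
  intro h
  have h2 : tt p d e = 0 := by
    unfold tt
    exact Int.emod_eq_zero_of_dvd h
  rw [tt_eq hp hd hpd] at h2
  have := ss_lt hp hd hpd e
  omega

lemma fpt_zero (hp0 : 0 < p) : fpt p (0 : MvPolynomial (Fin n) K) = 0 := by
  have hS : ∀ e, {N : ℕ | (0 : MvPolynomial (Fin n) K) ^ N ∉ frobPow p n K e} = {0} := by
    intro e
    ext N
    simp only [Set.mem_setOf_eq, Set.mem_singleton_iff]
    constructor
    · intro h
      by_contra hN
      exact h (by rw [zero_pow hN]; exact zero_mem _)
    · rintro rfl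
      rw [pow_zero]
      exact one_not_mem_frobPow hp0 e
  have hnu : ∀ e, nu p (0 : MvPolynomial (Fin n) K) e = 0 := by
    intro e
    rw [nu, hS e, csSup_singleton]
  rw [fpt]
  simp only [hnu, Nat.cast_zero, zero_div]
  exact ciSup_const

lemma main3 (hp : p.Prime) (hd : 2 ≤ d) (hpd : ¬ p ∣ d)
    (hdig : ∃ e, 1 ≤ e ∧ digit p e (((d : ℝ) - 1) / d) < digit p 1 (((d : ℝ) - 1) / d))
    {f : MvPolynomial (Fin n) K} (hfpt : fpt p f = ((d : ℝ) - 1) / d)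
    (hf : f ∈ mIdeal n K) : False := by
  haveI := Fact.mk hp
  have hp2 : 2 ≤ p := hp.two_le
  have hd0R : (0:ℝ) < (d:ℝ) := by exact_mod_cast (by omega : 0 < d)
  have hlam_pos : (0:ℝ) < ((d:ℝ) - 1)/d := by
    apply div_pos _ hd0R
    have : (2:ℝ) ≤ (d:ℝ) := by exact_mod_cast hd
    linarith
  -- f ≠ 0
  have hf0 : f ≠ 0 := by
    rintro rfl
    rw [fpt_zero (by omega)] at hfpt
    linarith [hfpt ▸ hlam_pos]
  -- constant coefficient is zero
  have hc : constantCoeff f = 0 := by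
    have hker : mIdeal n K ≤ RingHom.ker (constantCoeff (σ := Fin n) (R := K)) := by
      rw [mIdeal, Ideal.span_le]
      rintro _ ⟨i, rfl⟩
      simp [RingHom.mem_ker]
    exact hker hf
  -- degree bound on supports of powers
  have hdeg : ∀ N : ℕ, ∀ m ∈ (f ^ N).support, N ≤ ∑ i, m i := by
    intro N
    induction N with
    | zero =>
      intro m _
      exact Nat.zero_le _
    | succ N ih =>
      intro m hm
      classical
      rw [pow_succ] at hm
      have := MvPolynomial.support_mul _ _ hm
      rw [Finset.mem_add] at this
      obtain ⟨a, ha, b, hb, rfl⟩ := this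
      have hb1 : 1 ≤ ∑ i, b i := by
        by_contra hb0
        have hsum : ∑ i, b i = 0 := by omega
        have hbz : b = 0 := by
          ext i
          exact (Finset.sum_eq_zero_iff.mp hsum) i (Finset.mem_univ i)
        rw [mem_support_iff, hbz] at hb
        exact hb hc
      have hsum : ∑ i, (a + b) i = (∑ i, a i) + ∑ i, b i := by
        simp [Finsupp.add_apply, Finset.sum_add_distrib]
      rw [hsum]
      have := ih a ha
      omega
  -- the set defining nu
  set S : ℕ → Set ℕ := fun e => {N : ℕ | f ^ N ∉ frobPow p n K e} with hSdef
  have hS0 : ∀ e, 0 ∈ S e := by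
    intro e
    simp only [hSdef, Set.mem_setOf_eq, pow_zero]
    exact one_not_mem_frobPow (by omega) e
  have hSbdd : ∀ e, BddAbove (S e) := by
    intro e
    refine ⟨n * p ^ e, fun N hN => ?_⟩
    by_contra hlt
    push_neg at hlt
    apply hN
    rw [mem_frobPow_iff]
    intro m hm
    by_contra hall
    push_neg at hall
    have h1 := hdeg N m hm
    have h2 : ∑ i, m i ≤ n * (p ^ e - 1) := by
      calc ∑ i, m i ≤ ∑ _i : Fin n, (p ^ e - 1) :=
            Finset.sum_le_sum (fun i _ => by have := hall i; omega)
        _ = n * (p ^ e - 1) := by simp [Finset.sum_const, mul_comm]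
    have hpe : 1 ≤ p ^ e := Nat.one_le_pow _ _ (by omega)
    have : N ≤ n * p ^ e := by
      calc N ≤ n * (p ^ e - 1) := le_trans h1 h2
        _ ≤ n * p ^ e := Nat.mul_le_mul_left _ (by omega)
    omega
  set ν : ℕ → ℕ := nu p f with hν
  have hmem : ∀ e, f ^ ν e ∉ frobPow p n K e := fun e =>
    Nat.sSup_mem ⟨0, hS0 e⟩ (hSbdd e)
  have hub : ∀ e, ∀ N ∈ S e, N ≤ ν e := fun e N hN => le_csSup (hSbdd e) hN
  have hclosed : ∀ e M N, M ≤ N → f ^ M ∈ frobPow p n K e → f ^ N ∈ frobPow p n K e := by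
    intro e M N hMN hM
    obtain ⟨k, rfl⟩ := Nat.exists_eq_add_of_le hMN
    rw [pow_add]
    exact Ideal.mul_mem_right _ _ hM
  have hsucc : ∀ e, f ^ (ν e + 1) ∈ frobPow p n K e := by
    intro e
    by_contra h
    have := hub e (ν e + 1) h
    omega
  -- nu 0 = 0
  have hν0 : ν 0 = 0 := by
    have hfFP : f ∈ frobPow p n K 0 := by
      have : frobPow p n K 0 = mIdeal n K := by
        rw [frobPow, mIdeal]
        simp
      rw [this]
      exact hf
    have : ∀ N ∈ S 0, N ≤ 0 := by
      intro N hN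
      by_contra hN0
      apply hN
      have : f ^ 1 ∈ frobPow p n K 0 := by rwa [pow_one]
      exact hclosed 0 1 N (by omega) this
    exact Nat.le_zero.mp (csSup_le ⟨0, hS0 0⟩ this)
  -- upper recursion
  have hup : ∀ e, ν (e + 1) + 1 ≤ p * (ν e + 1) := by
    intro e
    by_contra h
    push_neg at h
    have h1 : f ^ ((ν e + 1) * p) ∈ frobPow p n K (e + 1) := by
      rw [pow_mul]
      exact frob_mem_succ hp (hsucc e)
    have hcomm : (ν e + 1) * p = p * (ν e + 1) := Nat.mul_comm _ _
    have h2 : f ^ (ν (e + 1)) ∈ frobPow p n K (e + 1) :=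
      hclosed (e + 1) ((ν e + 1) * p) (ν (e + 1)) (by omega) h1
    exact hmem (e + 1) h2
  -- lower recursion
  have hlow : ∀ e, p * ν e + ν 1 ≤ ν (e + 1) := by
    intro e
    apply hub (e + 1)
    have := key_lemma hp (hmem e) (hmem 1)
    rw [← pow_mul, ← pow_add] at this
    simpa [hSdef, mul_comm] using this
  -- iterated versions
  have hup' : ∀ e j, ν (e + j) + 1 ≤ p ^ j * (ν e + 1) := by
    intro e j
    induction j with
    | zero => simp
    | succ j ih =>
      have h1 := hup (e + j)
      calc ν (e + (j+1)) + 1 = ν ((e + j) + 1) + 1 := by ring_nf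
        _ ≤ p * (ν (e + j) + 1) := hup (e + j)
        _ ≤ p * (p ^ j * (ν e + 1)) := Nat.mul_le_mul_left _ ih
        _ = p ^ (j+1) * (ν e + 1) := by ring
  have hlow' : ∀ e j, p ^ j * ν e ≤ ν (e + j) := by
    intro e j
    induction j with
    | zero => simp
    | succ j ih =>
      calc p ^ (j+1) * ν e = p * (p ^ j * ν e) := by ring
        _ ≤ p * ν (e + j) := Nat.mul_le_mul_left _ ih
        _ ≤ p * ν (e + j) + ν 1 := Nat.le_add_right _ _
        _ ≤ ν ((e + j) + 1) := hlow (e + j)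
        _ = ν (e + (j + 1)) := by ring_nf
  -- bound: nu e + 1 ≤ p ^ e
  have hbound : ∀ e, ν e + 1 ≤ p ^ e := by
    intro e
    have := hup' 0 e
    rw [hν0] at this
    simpa using this
  -- real analysis
  have hpposR : (0:ℝ) < (p:ℝ) := by exact_mod_cast (by omega : 0 < p)
  have hBdd : BddAbove (Set.range fun e : ℕ => (ν e : ℝ) / (p:ℝ) ^ e) := by
    refine ⟨1, ?_⟩
    rintro _ ⟨e, rfl⟩
    rw [div_le_one (by positivity)]
    have := hbound e
    have : (ν e : ℝ) + 1 ≤ (p:ℝ) ^ e := by exact_mod_cast this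
    linarith
  have hle : ∀ e, (ν e : ℝ) / (p:ℝ) ^ e ≤ fpt p f := fun e => le_ciSup hBdd e
  have hge : ∀ e, fpt p f ≤ ((ν e : ℝ) + 1) / (p:ℝ) ^ e := by
    intro e
    apply ciSup_le
    intro k
    rw [div_le_div_iff₀ (by positivity) (by positivity)]
    rcases Nat.le_total k e with hke | hek
    · obtain ⟨j, rfl⟩ := Nat.exists_eq_add_of_le hke
      have h1 : p ^ j * ν k ≤ ν (k + j) := hlow' k j
      have h1R : (p:ℝ) ^ j * (ν k : ℝ) ≤ (ν (k + j) : ℝ) := by exact_mod_cast h1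
      have hpk : (0:ℝ) < (p:ℝ) ^ k := by positivity
      have hsplit : (p:ℝ) ^ (k + j) = (p:ℝ) ^ k * (p:ℝ) ^ j := by rw [pow_add]
      rw [hsplit]
      nlinarith [hpk, pow_pos hpposR j]
    · obtain ⟨j, rfl⟩ := Nat.exists_eq_add_of_le hek
      have h1 : ν (e + j) + 1 ≤ p ^ j * (ν e + 1) := hup' e j
      have h1R : (ν (e + j) : ℝ) + 1 ≤ (p:ℝ) ^ j * ((ν e : ℝ) + 1) := by exact_mod_cast h1
      have hpe : (0:ℝ) < (p:ℝ) ^ e := by positivity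
      have hsplit : (p:ℝ) ^ (e + j) = (p:ℝ) ^ e * (p:ℝ) ^ j := by rw [pow_add]
      rw [hsplit]
      nlinarith [hpe, pow_pos hpposR j]
  -- identify nu with AA
  have hνA : ∀ e, (ν e : ℤ) = AA p d e := by
    intro e
    have hceil := ceil_eq hp hd hpd e
    have hc2 := Int.ceil_eq_iff.mp hceil
    obtain ⟨hcl, hcu⟩ := hc2
    push_cast at hcl hcu
    set x : ℝ := ((d:ℝ) - 1)/d * (p:ℝ) ^ e with hx
    have hl : (ν e : ℝ) ≤ x := by
      have := hle e
      rw [hfpt] at this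
      rw [div_le_iff₀ (by positivity)] at this
      rw [hx]
      linarith [this]
    have hu : x ≤ (ν e : ℝ) + 1 := by
      have := hge e
      rw [hfpt] at this
      rw [le_div_iff₀ (by positivity)] at this
      rw [hx]
      linarith [this]
    have hclR : ((AA p d e : ℤ) : ℝ) < x := by push_cast at hcl ⊢; linarith
    have h4 : AA p d e < (ν e : ℤ) + 1 := by exact_mod_cast lt_of_lt_of_le hclR hu
    have h5 : (ν e : ℤ) ≤ AA p d e + 1 := by exact_mod_cast le_trans hl hcu
    rcases lt_or_eq_of_le h5 with h | h
    · omega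
    · exfalso
      have hcast : ((ν e : ℤ) : ℝ) = ((AA p d e : ℤ) : ℝ) + 1 := by exact_mod_cast h
      have hxeq : x = (ν e : ℝ) := by
        have hxle : x ≤ (ν e : ℝ) := by push_cast at hcast hcu ⊢; linarith
        linarith [hl, hxle]
      have hreal : ((d:ℝ) - 1) * (p:ℝ) ^ e = (ν e : ℝ) * d := by
        rw [hx] at hxeq
        field_simp at hxeq
        linarith [hxeq]
      have hZ : ((d:ℤ) - 1) * (p:ℤ) ^ e = (ν e : ℤ) * d := by exact_mod_cast hreal
      exact not_dvd_N hp hd hpd e ⟨(ν e : ℤ), by linarith [hZ]⟩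
  -- final contradiction
  obtain ⟨e, he, hlt⟩ := hdig
  obtain ⟨e', rfl⟩ : ∃ e', e = e' + 1 := ⟨e - 1, by omega⟩
  rw [digit_eq hp hd hpd, show (1:ℕ) = 0 + 1 from rfl, digit_eq hp hd hpd] at hlt
  rw [← hνA, ← hνA, ← hνA, ← hνA] at hlt
  have h0 := hν0
  have hl1 := hlow e'
  have : (ν (e' + 1) : ℤ) - p * ν e' < (ν (0 + 1) : ℤ) - p * ν 0 := hlt
  rw [h0] at this
  push_cast at this
  have hl1Z : (p : ℤ) * ν e' + ν 1 ≤ ν (e' + 1) := by exact_mod_cast hl1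
  norm_num at this
  omega

end Main

/-- for `λ = (d−1)/d` with `p ∤ d`: if `p ≡ 1 (mod d)` all base `p`
digits of `λ` coincide; otherwise the first digit strictly exceeds some later digit,
and consequently `1 − 1/d` is not the F-pure threshold of any polynomial in
characteristic `p`. -/
theorem stmt_19 (p : ℕ) (hp : p.Prime) (d : ℕ) (hd : 2 ≤ d) (hpd : ¬ p ∣ d) :
    (p % d = 1 % d → ∀ e, 1 ≤ e → digit p e (((d : ℝ) - 1) / d) = digit p 1 (((d : ℝ) - 1) / d)) ∧
    (p % d ≠ 1 % d → ∃ e, 1 ≤ e ∧ digit p e (((d : ℝ) - 1) / d) < digit p 1 (((d : ℝ) - 1) / d)) ∧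
    (p % d ≠ 1 % d → ∀ (n : ℕ) (K : Type) (_ : Field K) (_ : CharP K p)
      (f : MvPolynomial (Fin n) K), f ∈ mIdeal n K →
        fpt p f ≠ ((d : ℝ) - 1) / d) := by
  obtain ⟨h1, h2⟩ := parts12 hp hd hpd
  refine ⟨h1, h2, ?_⟩
  intro hmod n K _ _ f hf hfpt
  exact main3 hp hd hpd (h2 hmod) hfpt hf
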